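/- arXiv:2309.04874 — 2 statements merged into one kernel-verified Lean document; each statement's English description precedes it below -/
import Mathlib

section
/- Let H be a separable real Hilbert space, let 1 < p ≤ 2 and let q satisfy 1/p + 1/q = 1. If B belongs to the class K^p_{1/2}(H), then for every δ ∈ (0, 1/2] there exists a constant C_δ > 0 such that the function C_δ·B belongs to the class K^p_δ(H). -/
open MeasureTheory ENNReal Set

noncomputable section

variable {H : Type*} [NormedAddCommGroup H] [InnerProductSpace ℝ H] [CompleteSpace H]
  [SecondCountableTopology H]

/-- The domain `Ω_p = {x ∈ H × [0,∞)³ : ‖x₁‖^p ≤ x₃, x₂^q ≤ x₄²}`. -/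
def OmegaP (p q : ℝ) : Set (H × ℝ × ℝ × ℝ) :=
  {x | 0 ≤ x.2.1 ∧ 0 ≤ x.2.2.1 ∧ 0 ≤ x.2.2.2 ∧
    ‖x.1‖ ^ p ≤ x.2.2.1 ∧ x.2.1 ^ q ≤ x.2.2.2 ^ (2 : ℕ)}

/-- Condition (B2): the geometric concave-type condition with parameter `δ`. -/
def CondB2 (p q δ : ℝ) (B : H × ℝ × ℝ × ℝ → ℝ) : Prop :=
  ∀ (N : ℕ) (x : H × ℝ × ℝ × ℝ) (y : Fin N → H × ℝ × ℝ × ℝ) (d : ℝ) (lam : Fin N → ℝ),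
    x ∈ OmegaP p q → (∀ k, y k ∈ OmegaP p q) → (∀ k, δ ≤ lam k) →
    (∑ k, lam k) = 1 →
    (∑ k, lam k • y k) - x = ((0 : H), d ^ (2 : ℕ), (0 : ℝ), (0 : ℝ)) →
    |d| * Metric.diam (Set.range fun k => (y k).1) + ∑ k, lam k * B (y k) ≤ B x

/-- The class `K^p_δ(H)`: continuity on `Ω_p`, the boundary condition (B1) and
the concave-type condition (B2). -/
def MemK (p q δ : ℝ) (B : H × ℝ × ℝ × ℝ → ℝ) : Prop :=
  ContinuousOn B (OmegaP p q) ∧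
  (∀ x ∈ OmegaP (H := H) p q, ‖x.1‖ ^ p = x.2.2.1 → 0 ≤ B x) ∧
  CondB2 p q δ B

theorem concaveOn_of_midpoint_aux {E : Type*} [NormedAddCommGroup E] [NormedSpace ℝ E]
    {s : Set E} (hs : Convex ℝ s) {f : E → ℝ} (hc : ContinuousOn f s)
    (hm : ∀ u ∈ s, ∀ v ∈ s, (f u + f v) / 2 ≤ f ((1/2 : ℝ) • u + (1/2 : ℝ) • v)) :
    ConcaveOn ℝ s f := by
  refine ⟨hs, ?_⟩
  intro u hu v hv a b ha hb hab
  set φ : ℝ → E := fun t => u + t • (v - u) with hφ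
  have hφmem : ∀ t ∈ Icc (0:ℝ) 1, φ t ∈ s := fun t ht => hs.add_smul_sub_mem hu hv ht
  have hφmid : ∀ s t : ℝ, φ ((s + t) / 2) = (1/2 : ℝ) • φ s + (1/2 : ℝ) • φ t := by
    intro s t
    simp only [hφ, smul_sub, smul_add, add_smul, smul_smul]
    module
  set g : ℝ → ℝ := fun t => f (φ t) with hg
  have key : ∀ t ∈ Icc (0:ℝ) 1, (1 - t) * f u + t * f v ≤ g t := by
    have dyadic : ∀ n : ℕ, ∀ k : ℕ, k ≤ 2 ^ n →
        (1 - (k : ℝ) / 2 ^ n) * f u + ((k : ℝ) / 2 ^ n) * f v ≤ g ((k : ℝ) / 2 ^ n) := by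
      intro n
      induction n with
      | zero =>
        intro k hk
        interval_cases k
        · simp [hg, hφ]
        · norm_num [hg, hφ]
      | succ n ih =>
        intro k hk
        have h2n : (0:ℝ) < 2 ^ n := by positivity
        rcases le_or_gt k (2 ^ n) with h | h
        · have ht : ((k : ℝ) / 2 ^ (n+1)) = (0 + (k : ℝ) / 2 ^ n) / 2 := by
            rw [pow_succ]; ring
          have h0 : φ 0 ∈ s := hφmem 0 ⟨le_refl _, zero_le_one⟩
          have h1 : φ ((k : ℝ) / 2 ^ n) ∈ s := by
            refine hφmem _ ⟨by positivity, ?_⟩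
            rw [div_le_one h2n]
            exact_mod_cast Nat.cast_le.mpr h
          have := hm _ h0 _ h1
          rw [← hφmid 0 ((k : ℝ) / 2 ^ n)] at this
          have hg0 : g 0 = f u := by simp [hg, hφ]
          have := ih k h
          have goal : (1 - (k : ℝ) / 2 ^ (n+1)) * f u + ((k : ℝ) / 2 ^ (n+1)) * f v ≤
              g ((k : ℝ) / 2 ^ (n+1)) := by
            rw [ht]
            calc (1 - (0 + (k : ℝ) / 2 ^ n) / 2) * f u + ((0 + (k : ℝ) / 2 ^ n) / 2) * f v
                = (f u + ((1 - (k : ℝ) / 2 ^ n) * f u + ((k : ℝ) / 2 ^ n) * f v)) / 2 := by ring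
              _ ≤ (g 0 + g ((k : ℝ) / 2 ^ n)) / 2 := by rw [hg0]; linarith
              _ ≤ g ((0 + (k : ℝ) / 2 ^ n) / 2) := by
                  have := hm _ h0 _ h1
                  rw [← hφmid 0 ((k : ℝ) / 2 ^ n)] at this
                  exact this
          exact goal
        · set k' : ℕ := k - 2 ^ n with hk'
          have hkk : (k : ℝ) = (k' : ℝ) + 2 ^ n := by
            have h2 : k' + 2 ^ n = k := Nat.sub_add_cancel h.le
            have h3 : ((k' + 2 ^ n : ℕ) : ℝ) = (k : ℝ) := congrArg (Nat.cast : ℕ → ℝ) h2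
            push_cast at h3
            linarith
          have hk'le : k' ≤ 2 ^ n := by
            have : k ≤ 2 ^ n + 2 ^ n := by
              have := hk; rw [pow_succ] at this; omega
            omega
          have ht : ((k : ℝ) / 2 ^ (n+1)) = ((k' : ℝ) / 2 ^ n + 1) / 2 := by
            rw [hkk, pow_succ]; field_simp
          have h1 : φ ((k' : ℝ) / 2 ^ n) ∈ s := by
            refine hφmem _ ⟨by positivity, ?_⟩
            rw [div_le_one h2n]
            exact_mod_cast Nat.cast_le.mpr hk'le
          have h2 : φ 1 ∈ s := hφmem 1 ⟨zero_le_one, le_refl _⟩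
          have hg1 : g 1 = f v := by simp [hg, hφ]
          have ihk := ih k' hk'le
          rw [ht]
          calc (1 - ((k' : ℝ) / 2 ^ n + 1) / 2) * f u + (((k' : ℝ) / 2 ^ n + 1) / 2) * f v
              = (((1 - (k' : ℝ) / 2 ^ n) * f u + ((k' : ℝ) / 2 ^ n) * f v) + f v) / 2 := by ring
            _ ≤ (g ((k' : ℝ) / 2 ^ n) + g 1) / 2 := by rw [hg1]; linarith
            _ ≤ g (((k' : ℝ) / 2 ^ n + 1) / 2) := by
                have := hm _ h1 _ h2
                rw [← hφmid ((k' : ℝ) / 2 ^ n) 1] at this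
                exact this
    -- density step
    intro t ht
    obtain ⟨ht0, ht1⟩ := ht
    set a : ℕ → ℝ := fun n => (⌊t * 2 ^ n⌋₊ : ℝ) / 2 ^ n with ha
    have hamem : ∀ n, a n ∈ Icc (0:ℝ) 1 := by
      intro n
      have h2n : (0:ℝ) < 2 ^ n := by positivity
      constructor
      · positivity
      · rw [div_le_one h2n]
        have : ⌊t * 2 ^ n⌋₊ ≤ 2 ^ n := by
          have h1 : t * 2 ^ n ≤ (2 ^ n : ℕ) := by push_cast; nlinarith
          calc ⌊t * 2 ^ n⌋₊ ≤ ⌊((2 ^ n : ℕ) : ℝ)⌋₊ := Nat.floor_le_floor h1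
            _ = 2 ^ n := Nat.floor_natCast _
        exact_mod_cast this
    have halow : ∀ n, t - (1/2) ^ n ≤ a n := by
      intro n
      have h2n : (0:ℝ) < 2 ^ n := by positivity
      have := Nat.lt_floor_add_one (t * 2 ^ n)
      rw [ha]
      rw [sub_le_iff_le_add, div_add' _ _ _ h2n.ne']
      rw [le_div_iff₀ h2n]
      have : t * 2 ^ n < ⌊t * 2 ^ n⌋₊ + 1 := Nat.lt_floor_add_one _
      have h12 : (1/2 : ℝ) ^ n * 2 ^ n = 1 := by
        rw [← mul_pow]; norm_num
      nlinarith
    have hahigh : ∀ n, a n ≤ t := by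
      intro n
      have h2n : (0:ℝ) < 2 ^ n := by positivity
      rw [ha, div_le_iff₀ h2n]
      exact Nat.floor_le (by positivity)
    have hatend : Filter.Tendsto a Filter.atTop (nhds t) := by
      have h1 : Filter.Tendsto (fun n : ℕ => t - (1/2 : ℝ) ^ n) Filter.atTop (nhds (t - 0)) :=
        Filter.Tendsto.const_sub _ (tendsto_pow_atTop_nhds_zero_of_lt_one (by norm_num) (by norm_num))
      rw [sub_zero] at h1
      exact tendsto_of_tendsto_of_tendsto_of_le_of_le h1 tendsto_const_nhds halow hahigh
    have hgc : ContinuousOn g (Icc (0:ℝ) 1) := by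
      apply hc.comp
      · exact (continuous_const.add (continuous_id.smul continuous_const)).continuousOn
      · exact hφmem
    have hgt : Filter.Tendsto (fun n => g (a n)) Filter.atTop (nhds (g t)) := by
      have : Filter.Tendsto a Filter.atTop (nhdsWithin t (Icc (0:ℝ) 1)) :=
        tendsto_nhdsWithin_of_tendsto_nhds_of_eventually_within a hatend
          (Filter.Eventually.of_forall hamem)
      exact (hgc t ⟨ht0, ht1⟩).tendsto.comp this
    have hlt : Filter.Tendsto (fun n => (1 - a n) * f u + a n * f v) Filter.atTop
        (nhds ((1 - t) * f u + t * f v)) := by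
      exact (((tendsto_const_nhds.sub hatend).mul tendsto_const_nhds).add
        (hatend.mul tendsto_const_nhds))
    refine le_of_tendsto_of_tendsto' hlt hgt ?_
    intro n
    have h2n : (0:ℝ) < 2 ^ n := by positivity
    have : a n = (⌊t * 2 ^ n⌋₊ : ℝ) / 2 ^ n := rfl
    rw [this]
    refine dyadic n _ ?_
    have h1 : t * 2 ^ n ≤ (2 ^ n : ℕ) := by push_cast; nlinarith
    calc ⌊t * 2 ^ n⌋₊ ≤ ⌊((2 ^ n : ℕ) : ℝ)⌋₊ := Nat.floor_le_floor h1
      _ = 2 ^ n := Nat.floor_natCast _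
  have hb1 : b ≤ 1 := by linarith
  have hmem : φ b ∈ s := hφmem b ⟨hb, hb1⟩
  have := key b ⟨hb, hb1⟩
  have hab' : a = 1 - b := by linarith
  have hpt : a • u + b • v = φ b := by
    rw [hab', hφ]
    simp only [smul_sub, sub_smul, one_smul]
    abel
  rw [hpt]
  rw [smul_eq_mul, smul_eq_mul, hab']
  exact this


theorem convex_omegaP {p q : ℝ} (hp1 : 1 ≤ p) (hq2 : 2 ≤ q) :
    Convex ℝ (OmegaP (H := H) p q) := by
  have hq0 : (0:ℝ) ≤ q := by linarith
  have hp0 : (0:ℝ) ≤ p := by linarith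
  have half : ∀ s t : ℝ, 0 ≤ s → 0 ≤ t → (s ^ q ≤ t ^ (2 : ℕ) ↔ s ^ (q / 2) ≤ t) := by
    intro s t hs ht
    constructor
    · intro h
      have h1 : s ^ (q / 2) = (s ^ q) ^ ((2:ℝ)⁻¹) := by
        rw [← Real.rpow_mul hs]; congr 1
      have h2 : (t ^ (2:ℕ)) ^ ((2:ℝ)⁻¹) = t := by
        rw [← Real.rpow_natCast t 2, ← Real.rpow_mul ht]; norm_num
      rw [h1, ← h2]
      exact Real.rpow_le_rpow (Real.rpow_nonneg hs q) h (by norm_num)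
    · intro h
      have h1 : s ^ q = (s ^ (q / 2)) ^ (2:ℕ) := by
        rw [← Real.rpow_natCast (s ^ (q/2)) 2, ← Real.rpow_mul hs]
        norm_num
      rw [h1]
      exact pow_le_pow_left₀ (Real.rpow_nonneg hs _) h 2
  intro x hx y hy a b ha hb hab
  obtain ⟨hx1, hx2, hx3, hx4, hx5⟩ := hx
  obtain ⟨hy1, hy2, hy3, hy4, hy5⟩ := hy
  have hc1 : (a • x + b • y).1 = a • x.1 + b • y.1 := rfl
  have hc2 : (a • x + b • y).2.1 = a * x.2.1 + b * y.2.1 := rfl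
  have hc3 : (a • x + b • y).2.2.1 = a * x.2.2.1 + b * y.2.2.1 := rfl
  have hc4 : (a • x + b • y).2.2.2 = a * x.2.2.2 + b * y.2.2.2 := rfl
  refine ⟨by rw [hc2]; positivity, by rw [hc3]; positivity, by rw [hc4]; positivity, ?_, ?_⟩
  · rw [hc1, hc3]
    have hn : ‖a • x.1 + b • y.1‖ ≤ a * ‖x.1‖ + b * ‖y.1‖ := by
      calc ‖a • x.1 + b • y.1‖ ≤ ‖a • x.1‖ + ‖b • y.1‖ := norm_add_le _ _
        _ = a * ‖x.1‖ + b * ‖y.1‖ := by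
            rw [norm_smul, norm_smul, Real.norm_eq_abs, Real.norm_eq_abs,
              abs_of_nonneg ha, abs_of_nonneg hb]
    calc ‖a • x.1 + b • y.1‖ ^ p ≤ (a * ‖x.1‖ + b * ‖y.1‖) ^ p :=
          Real.rpow_le_rpow (norm_nonneg _) hn hp0
      _ ≤ a * ‖x.1‖ ^ p + b * ‖y.1‖ ^ p := by
          have := (convexOn_rpow hp1).2 (mem_Ici.mpr (norm_nonneg x.1))
            (mem_Ici.mpr (norm_nonneg y.1)) ha hb hab
          simpa using this
      _ ≤ a * x.2.2.1 + b * y.2.2.1 := by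
          have h1 := mul_le_mul_of_nonneg_left hx4 ha
          have h2 := mul_le_mul_of_nonneg_left hy4 hb
          linarith
  · rw [hc2, hc4]
    rw [half _ _ (by positivity) (by positivity)]
    have hx5' := (half _ _ hx1 hx3).mp hx5
    have hy5' := (half _ _ hy1 hy3).mp hy5
    have hq2' : (1:ℝ) ≤ q / 2 := by linarith
    calc (a * x.2.1 + b * y.2.1) ^ (q / 2)
        ≤ a * x.2.1 ^ (q / 2) + b * y.2.1 ^ (q / 2) := by
          have := (convexOn_rpow hq2').2 (mem_Ici.mpr hx1) (mem_Ici.mpr hy1) ha hb hab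
          simpa using this
      _ ≤ a * x.2.2.2 + b * y.2.2.2 := by
          have h1 := mul_le_mul_of_nonneg_left hx5' ha
          have h2 := mul_le_mul_of_nonneg_left hy5' hb
          linarith


set_option maxHeartbeats 2000000

/-- If `B ∈ K^p_{1/2}(H)`, then for every `δ ∈ (0, 1/2]` there is a constant `C_δ > 0`
such that `C_δ · B ∈ K^p_δ(H)`. -/
theorem lemma_any_delta (p q : ℝ) (hp : 1 < p) (hp2 : p ≤ 2) (hpq : 1 / p + 1 / q = 1)
    (B : H × ℝ × ℝ × ℝ → ℝ) (hB : MemK p q (1 / 2) B) :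
    ∀ δ : ℝ, 0 < δ → δ ≤ 1 / 2 →
      ∃ C : ℝ, 0 < C ∧ MemK p q δ (fun x => C * B x) := by
  intro δ hδ hδ2
  have hp0 : (0:ℝ) < p := by linarith
  have hp1 : (1:ℝ) ≤ p := hp.le
  have hq2 : (2:ℝ) ≤ q := by
    have h2 : 1/p < 1 := by rw [div_lt_one hp0]; exact hp
    have hq0 : 0 < 1/q := by linarith
    have hq0' : 0 < q := one_div_pos.mp hq0
    have h1 : 1/2 ≤ 1/p := by rw [div_le_div_iff₀ two_pos hp0]; linarith
    have h3 : 1/q ≤ 1/2 := by linarith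
    rw [div_le_div_iff₀ hq0' two_pos] at h3
    linarith
  have hΩ : Convex ℝ (OmegaP (H := H) p q) := convex_omegaP hp1 hq2
  have hmid : ∀ u ∈ OmegaP (H := H) p q, ∀ v ∈ OmegaP (H := H) p q,
      (B u + B v) / 2 ≤ B ((1/2 : ℝ) • u + (1/2 : ℝ) • v) := by
    intro u hu v hv
    have hmΩ : (1/2 : ℝ) • u + (1/2 : ℝ) • v ∈ OmegaP (H := H) p q :=
      hΩ hu hv (by norm_num) (by norm_num) (by norm_num)
    have h := hB.2.2 2 ((1/2 : ℝ) • u + (1/2 : ℝ) • v) ![u, v] 0 ![1/2, 1/2] hmΩ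
      (by intro k; fin_cases k <;> simpa)
      (by intro k; fin_cases k <;> norm_num)
      (by rw [Fin.sum_univ_two]; norm_num)
      (by
        rw [Fin.sum_univ_two]
        simp only [Matrix.cons_val_zero, Matrix.cons_val_one, Matrix.head_cons]
        rw [sub_self]
        norm_num [Prod.ext_iff])
    rw [Fin.sum_univ_two] at h
    simp only [Matrix.cons_val_zero, Matrix.cons_val_one, Matrix.head_cons, abs_zero,
      zero_mul, zero_add] at h
    linarith
  have hconc : ConcaveOn ℝ (OmegaP (H := H) p q) B :=
    concaveOn_of_midpoint_aux hΩ hB.1 hmid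
  refine ⟨δ⁻¹, by positivity, ?_, ?_, ?_⟩
  · exact continuousOn_const.mul hB.1
  · intro x hx h
    exact mul_nonneg (by positivity) (hB.2.1 x hx h)
  -- the main condition
  intro N x y d lam hx hy hlam hsum1 hconstr
  have hlam0 : ∀ k, 0 ≤ lam k := fun k => le_trans hδ.le (hlam k)
  obtain ⟨z, hzdef⟩ : ∃ z, ∑ k, lam k • y k = z := ⟨_, rfl⟩
  rw [hzdef] at hconstr
  have hz : z = ((0 : H), d ^ (2:ℕ), (0:ℝ), (0:ℝ)) + x := sub_eq_iff_eq_add.mp hconstr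
  rcases Nat.eq_zero_or_pos N with rfl | hN
  · -- N = 0
    have h0 : z = 0 := by rw [← hzdef]; simp
    rw [h0] at hz
    have hx1 : x.1 = 0 := by
      have := congrArg Prod.fst hz
      simpa using this.symm
    have hx2 : x.2.1 = -d ^ (2:ℕ) := by
      have := congrArg (fun w : H × ℝ × ℝ × ℝ => w.2.1) hz
      simp only [Prod.snd_add, Prod.fst_add] at this
      simp at this
      linarith
    have hx3 : x.2.2.1 = 0 := by
      have := congrArg (fun w : H × ℝ × ℝ × ℝ => w.2.2.1) hz
      simp at this
      linarith
    have hd : d = 0 := by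
      have h1 := hx.1
      rw [hx2] at h1
      nlinarith [sq_nonneg d]
    have hrange : (Set.range fun k : Fin 0 => (y k).1) = ∅ := Set.range_eq_empty _
    rw [hrange, hd]
    simp only [Metric.diam_empty, abs_zero, zero_mul, zero_add, Finset.univ_eq_empty,
      Finset.sum_empty]
    refine mul_nonneg (by positivity) (hB.2.1 x hx ?_)
    rw [hx1, hx3]
    simp [Real.zero_rpow hp0.ne']
  · -- N ≥ 1
    have hzΩ : z ∈ OmegaP (H := H) p q := by
      rw [← hzdef]
      exact hΩ.sum_mem (fun k _ => hlam0 k) hsum1 (fun k _ => hy k)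
    have key : ∀ u v : H × ℝ × ℝ × ℝ, u ∈ OmegaP (H := H) p q → v ∈ OmegaP (H := H) p q →
        (1/2 : ℝ) • u + (1/2 : ℝ) • v = z →
        |d| * dist u.1 v.1 + (B u + B v) / 2 ≤ B x := by
      intro u v hu hv hcomb
      have h := hB.2.2 2 x ![u, v] d ![1/2, 1/2] hx
        (by intro k; fin_cases k <;> simpa)
        (by intro k; fin_cases k <;> norm_num)
        (by rw [Fin.sum_univ_two]; norm_num)
        (by
          rw [Fin.sum_univ_two]
          simp only [Matrix.cons_val_zero, Matrix.cons_val_one, Matrix.head_cons]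
          rw [hcomb]
          exact hconstr)
      have hr : (Set.range fun k => (![u, v] k).1) = {u.1, v.1} := by
        have heq : (fun k => (![u, v] k).1) = ![u.1, v.1] := by
          funext k; fin_cases k <;> rfl
        rw [heq, Matrix.range_cons, Matrix.range_cons_empty, Set.singleton_union]
      rw [hr, Metric.diam_pair, Fin.sum_univ_two] at h
      simp only [Matrix.cons_val_zero, Matrix.cons_val_one, Matrix.head_cons] at h
      linarith
    obtain ⟨S, hSdef⟩ : ∃ S, ∑ m, lam m * B (y m) = S := ⟨_, rfl⟩
    have claim : ∀ k, 2 * δ * |d| * dist ((y k).1) z.1 + S ≤ B x := by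
      intro k
      have htδ : δ ≤ lam k := hlam k
      rcases le_or_gt (1/2 : ℝ) (lam k) with hhalf | hhalf
      · -- lam k ≥ 1/2
        have hν0 : ∀ m, (0:ℝ) ≤ 2 * lam m - (if m = k then 1 else 0) := by
          intro m
          by_cases hmk : m = k
          · rw [if_pos hmk, hmk]; linarith
          · rw [if_neg hmk]; have := hlam0 m; linarith
        have hνsum : ∑ m, (2 * lam m - (if m = k then 1 else 0)) = 1 := by
          rw [Finset.sum_sub_distrib, ← Finset.mul_sum, hsum1]
          simp
          norm_num
        have hν1 : ∑ m, (2 * lam m - (if m = k then 1 else 0)) • y m = (2:ℝ) • z - y k := by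
          have heq : ∀ m, (2 * lam m - (if m = k then 1 else 0)) • y m
              = (2:ℝ) • (lam m • y m) - (if m = k then y m else 0) := by
            intro m
            by_cases hmk : m = k <;>
              simp [hmk, sub_smul, mul_smul]
          rw [Finset.sum_congr rfl fun m _ => heq m, Finset.sum_sub_distrib,
            ← Finset.smul_sum, hzdef]
          simp
        obtain ⟨v, hvdef⟩ : ∃ v, ∑ m, (2 * lam m - (if m = k then 1 else 0)) • y m = v := ⟨_, rfl⟩
        rw [hvdef] at hν1
        have hvΩ : v ∈ OmegaP (H := H) p q := by
          rw [← hvdef]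
          exact hΩ.sum_mem (fun m _ => hν0 m) hνsum (fun m _ => hy m)
        have hcomb : (1/2 : ℝ) • (y k) + (1/2 : ℝ) • v = z := by
          rw [hν1]; module
        have hkey := key (y k) v (hy k) hvΩ hcomb
        have hdist : dist ((y k).1) v.1 = 2 * dist ((y k).1) z.1 := by
          rw [dist_eq_norm, dist_eq_norm]
          have h1 : (y k).1 - v.1 = (2:ℝ) • ((y k).1 - z.1) := by
            have hv1 : v.1 = (2:ℝ) • z.1 - (y k).1 := by
              rw [hν1]; rfl
            rw [hv1]; module
          rw [h1, norm_smul]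
          simp [Real.norm_eq_abs]
        have hBv : ∑ m, (2 * lam m - (if m = k then 1 else 0)) * B (y m) ≤ B v := by
          have := hconc.le_map_sum (fun m _ => hν0 m) hνsum (fun m _ => hy m)
          rw [hvdef] at this
          simpa using this
        have hνB : ∑ m, (2 * lam m - (if m = k then 1 else 0)) * B (y m)
            = 2 * S - B (y k) := by
          have heq : ∀ m, (2 * lam m - (if m = k then 1 else 0)) * B (y m)
              = 2 * (lam m * B (y m)) - (if m = k then B (y m) else 0) := by
            intro m
            by_cases hmk : m = k <;> simp [hmk] <;> ring
          rw [Finset.sum_congr rfl fun m _ => heq m, Finset.sum_sub_distrib,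
            ← Finset.mul_sum, hSdef]
          simp
        rw [hνB] at hBv
        rw [hdist] at hkey
        nlinarith [mul_nonneg (abs_nonneg d) (dist_nonneg (x := (y k).1) (y := z.1)), hδ2]
      · -- lam k < 1/2
        have h1t : (0:ℝ) < 1 - lam k := by linarith
        have hμ0 : ∀ m, (0:ℝ) ≤ (1 - lam k)⁻¹ * (if m = k then 0 else lam m) := by
          intro m
          by_cases hmk : m = k
          · simp [hmk]
          · rw [if_neg hmk]
            exact mul_nonneg (by positivity) (hlam0 m)
        have hitesum : ∑ m, (if m = k then (0:ℝ) else lam m) = 1 - lam k := by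
          have heq : ∀ m, (if m = k then (0:ℝ) else lam m)
              = lam m - (if m = k then lam m else 0) := by
            intro m; by_cases hmk : m = k <;> simp [hmk]
          rw [Finset.sum_congr rfl fun m _ => heq m, Finset.sum_sub_distrib, hsum1]
          simp
        have hμsum : ∑ m, (1 - lam k)⁻¹ * (if m = k then (0:ℝ) else lam m) = 1 := by
          rw [← Finset.mul_sum, hitesum]
          field_simp
        have hitevec : ∑ m, (if m = k then (0:ℝ) else lam m) • y m = z - lam k • y k := by
          have heq : ∀ m, (if m = k then (0:ℝ) else lam m) • y m
              = lam m • y m - (if m = k then lam m • y m else 0) := by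
            intro m; by_cases hmk : m = k <;> simp [hmk]
          rw [Finset.sum_congr rfl fun m _ => heq m, Finset.sum_sub_distrib, hzdef]
          simp
        obtain ⟨w, hwdef⟩ : ∃ w,
            ∑ m, ((1 - lam k)⁻¹ * (if m = k then (0:ℝ) else lam m)) • y m = w := ⟨_, rfl⟩
        have hwΩ : w ∈ OmegaP (H := H) p q := by
          rw [← hwdef]
          exact hΩ.sum_mem (fun m _ => hμ0 m) hμsum (fun m _ => hy m)
        have hw : (1 - lam k) • w = z - lam k • y k := by
          rw [← hwdef]
          have heq : ∀ m, ((1 - lam k)⁻¹ * (if m = k then (0:ℝ) else lam m)) • y m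
              = (1 - lam k)⁻¹ • ((if m = k then (0:ℝ) else lam m) • y m) := by
            intro m; rw [smul_smul]
          rw [Finset.sum_congr rfl fun m _ => heq m, ← Finset.smul_sum, hitevec,
            smul_smul, mul_inv_cancel₀ h1t.ne', one_smul]
        obtain ⟨u, hudef⟩ : ∃ u, (2 * lam k) • y k + (1 - 2 * lam k) • w = u := ⟨_, rfl⟩
        have huΩ : u ∈ OmegaP (H := H) p q := by
          rw [← hudef]
          exact hΩ (hy k) hwΩ (by linarith) (by linarith) (by ring)
        have hcomb : (1/2 : ℝ) • u + (1/2 : ℝ) • w = z := by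
          rw [← hudef]
          have h1 : (1/2 : ℝ) • ((2 * lam k) • y k + (1 - 2 * lam k) • w) + (1/2 : ℝ) • w
              = lam k • y k + (1 - lam k) • w := by module
          rw [h1, hw]
          module
        have hkey := key u w huΩ hwΩ hcomb
        have hzw : (y k).1 - z.1 = (1 - lam k) • ((y k).1 - w.1) := by
          have h2 := congrArg Prod.fst hw
          simp only [Prod.smul_fst, Prod.fst_sub] at h2
          have h3 : z.1 = lam k • (y k).1 + (1 - lam k) • w.1 := by
            rw [h2]
            show z.1 = lam k • (y k).1 + (z - lam k • y k).1
            simp only [Prod.fst_sub, Prod.smul_fst]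
            module
          rw [h3]; module
        have huw : u.1 - w.1 = (2 * lam k) • ((y k).1 - w.1) := by
          rw [← hudef]
          show ((2 * lam k) • (y k).1 + (1 - 2 * lam k) • w.1) - w.1
              = (2 * lam k) • ((y k).1 - w.1)
          module
        have hdist : 2 * δ * dist ((y k).1) z.1 ≤ dist u.1 w.1 := by
          rw [dist_eq_norm, dist_eq_norm, hzw, huw, norm_smul, norm_smul]
          simp only [Real.norm_eq_abs]
          have ht1 : |1 - lam k| = 1 - lam k := abs_of_pos h1t
          have ht2 : |2 * lam k| = 2 * lam k := abs_of_nonneg (by linarith)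
          rw [ht1, ht2]
          have hnn : (0:ℝ) ≤ ‖(y k).1 - w.1‖ := norm_nonneg _
          nlinarith [mul_nonneg (sub_nonneg.mpr htδ) hnn,
            mul_nonneg (mul_nonneg hδ.le (hlam0 k)) hnn]
        have hBw : ∑ m, ((1 - lam k)⁻¹ * (if m = k then (0:ℝ) else lam m)) * B (y m)
            ≤ B w := by
          have := hconc.le_map_sum (fun m _ => hμ0 m) hμsum (fun m _ => hy m)
          rw [hwdef] at this
          simpa using this
        have hμB : (1 - lam k) * (∑ m, ((1 - lam k)⁻¹ * (if m = k then (0:ℝ) else lam m))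
            * B (y m)) = S - lam k * B (y k) := by
          rw [Finset.mul_sum]
          have heq : ∀ m, (1 - lam k) * (((1 - lam k)⁻¹ * (if m = k then (0:ℝ) else lam m))
              * B (y m)) = lam m * B (y m) - (if m = k then lam m * B (y m) else 0) := by
            intro m
            by_cases hmk : m = k
            · simp [hmk]
            · rw [if_neg hmk, if_neg hmk, sub_zero]
              field_simp
          rw [Finset.sum_congr rfl fun m _ => heq m, Finset.sum_sub_distrib, hSdef]
          simp
        have hBu : (2 * lam k) * B (y k) + (1 - 2 * lam k) * B w ≤ B u := by
          have := hconc.2 (hy k) hwΩ (by linarith : (0:ℝ) ≤ 2 * lam k)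
            (by linarith : (0:ℝ) ≤ 1 - 2 * lam k) (by ring)
          rw [hudef] at this
          simpa [smul_eq_mul] using this
        have hBw' : S - lam k * B (y k) ≤ (1 - lam k) * B w := by
          rw [← hμB]
          exact mul_le_mul_of_nonneg_left hBw h1t.le
        have hd1 : |d| * (2 * δ * dist ((y k).1) z.1) ≤ |d| * dist u.1 w.1 :=
          mul_le_mul_of_nonneg_left hdist (abs_nonneg d)
        nlinarith [hkey, hBu, hBw', hd1]
    -- assemble
    have hSx : S ≤ B x := by
      have hc := claim ⟨0, hN⟩
      have h0 : (0:ℝ) ≤ 2 * δ * |d| * dist ((y ⟨0, hN⟩).1) z.1 := by positivity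
      linarith
    have hgoal : ∑ k, lam k * (δ⁻¹ * B (y k)) = δ⁻¹ * S := by
      rw [← hSdef, Finset.mul_sum]
      exact Finset.sum_congr rfl fun m _ => by ring
    show |d| * Metric.diam (Set.range fun k => (y k).1) + ∑ k, lam k * (δ⁻¹ * B (y k))
        ≤ δ⁻¹ * B x
    rw [hgoal]
    have hdiam : |d| * Metric.diam (Set.range fun k => (y k).1) ≤ δ⁻¹ * (B x - S) := by
      rcases eq_or_ne d 0 with hd | hd
      · rw [hd]
        simp only [abs_zero, zero_mul]
        have : (0:ℝ) ≤ δ⁻¹ * (B x - S) := mul_nonneg (by positivity) (by linarith)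
        linarith
      · have habs : 0 < |d| := abs_pos.mpr hd
        have hbound : Metric.diam (Set.range fun k => (y k).1) ≤ δ⁻¹ * (B x - S) / |d| := by
          apply Metric.diam_le_of_forall_dist_le
          · have : (0:ℝ) ≤ δ⁻¹ * (B x - S) := mul_nonneg (by positivity) (by linarith)
            positivity
          · rintro _ ⟨i, rfl⟩ _ ⟨j, rfl⟩
            have hi := claim i
            have hj := claim j
            have htri : dist ((y i).1) ((y j).1)
                ≤ dist ((y i).1) z.1 + dist ((y j).1) z.1 := by
              rw [dist_comm ((y j).1) z.1]
              exact dist_triangle _ _ _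
            rw [le_div_iff₀ habs]
            have hdnn : (0:ℝ) ≤ dist ((y i).1) ((y j).1) := dist_nonneg
            have hiz : (0:ℝ) ≤ dist ((y i).1) z.1 := dist_nonneg
            have hjz : (0:ℝ) ≤ dist ((y j).1) z.1 := dist_nonneg
            -- 2δ|d| dist_i ≤ Bx - S and same for j, so δ|d| (dist_i + dist_j) ≤ Bx - S
            have h2 : δ * |d| * (dist ((y i).1) ((y j).1)) ≤ B x - S := by
              nlinarith [mul_nonneg (mul_nonneg hδ.le habs.le)
                (sub_nonneg.mpr htri), hi, hj]
            have hfin : dist ((y i).1) ((y j).1) * |d| ≤ δ⁻¹ * (B x - S) := by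
              rw [← mul_le_mul_iff_right₀ hδ]
              calc δ * (dist ((y i).1) ((y j).1) * |d|)
                  = δ * |d| * dist ((y i).1) ((y j).1) := by ring
                _ ≤ B x - S := h2
                _ = δ * (δ⁻¹ * (B x - S)) := by
                    rw [← mul_assoc, mul_inv_cancel₀ hδ.ne', one_mul]
            exact hfin
        calc |d| * Metric.diam (Set.range fun k => (y k).1)
            ≤ |d| * (δ⁻¹ * (B x - S) / |d|) :=
              mul_le_mul_of_nonneg_left hbound habs.le
          _ = δ⁻¹ * (B x - S) := by field_simp
    have hfin2 : δ⁻¹ * S + δ⁻¹ * (B x - S) = δ⁻¹ * B x := by ring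
    linarith
end
end

section
/- For every δ ∈ (0, 1/2] there exists a constant c_δ > 0 with the following property. Let H be a real Hilbert space, N ∈ ℕ, x¹, …, x^N ∈ H, and let a₁, …, a_N be positive integers with b := a₁ + ⋯ + a_N even and a_k ≥ δ·b for every k. Then there exists an enumeration z₁, …, z_b of the multiset consisting of a_k copies of x^k for each k, such that |(z₁ + ⋯ + z_{b/2})/(b/2) − (z_{b/2+1} + ⋯ + z_b)/(b/2)| ≥ c_δ · diam{x¹, …, x^N}, where |·| is the H-norm and diam denotes the diameter. -/
open Finset

universe u

lemma card_sum_replicate {H : Type*} {N : ℕ} (a : Fin N → ℕ) (x : Fin N → H) :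
    Multiset.card (∑ k, Multiset.replicate (a k) (x k)) = ∑ k, a k := by
  induction (univ : Finset (Fin N)) using Finset.cons_induction with
  | empty => simp
  | cons k s hk ih => simp [Finset.sum_cons, ih]

lemma exists_sorted_enum {H : Type*} (f : H → ℝ) (M : Multiset H) (b : ℕ)
    (hcard : Multiset.card M = b) :
    ∃ z : Fin b → H, Multiset.map z Finset.univ.val = M ∧
      ∀ i j : Fin b, (i : ℕ) ≤ (j : ℕ) → f (z i) ≤ f (z j) := by
  classical
  set le : H → H → Bool := fun v w => decide (f v ≤ f w) with hle
  set l := M.toList.mergeSort le with hl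
  have hperm : l.Perm M.toList := List.mergeSort_perm _ _
  have hlen : l.length = b := by
    rw [hperm.length_eq, Multiset.length_toList, hcard]
  have hsort : List.Pairwise (fun v w => f v ≤ f w) l := by
    have h := List.pairwise_mergeSort (le := le)
      (fun a b c hab hbc => by simp only [hle, decide_eq_true_eq] at *; linarith)
      (fun a b => by simp only [hle, Bool.or_eq_true, decide_eq_true_eq]; exact le_total _ _)
      M.toList
    exact h.imp (fun h' => by simpa [hle, decide_eq_true_eq] using h')
  refine ⟨fun i => l.get (Fin.cast hlen.symm i), ?_, ?_⟩
  · have h1 : List.ofFn (fun i : Fin b => l.get (Fin.cast hlen.symm i)) = l := by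
      apply List.ext_get
      · simp [hlen]
      · intro n h₁ h₂
        simp [List.get_ofFn]
    calc Multiset.map (fun i : Fin b => l.get (Fin.cast hlen.symm i)) Finset.univ.val
        = ↑(List.map (fun i : Fin b => l.get (Fin.cast hlen.symm i)) (List.finRange b)) := by
          simp [Finset.univ, Fintype.elems]
      _ = ↑(List.ofFn (fun i : Fin b => l.get (Fin.cast hlen.symm i))) := by
          rw [List.ofFn_eq_map]
      _ = (↑l : Multiset H) := by rw [h1]
      _ = M := (Quot.sound hperm).trans (Multiset.coe_toList M)
  · intro i j hij
    haveI : Std.Refl (fun v w : H => f v ≤ f w) := ⟨fun a => le_refl _⟩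
    exact hsort.rel_get_of_le (Fin.le_def.mpr (by simpa using hij))

/-- For every `δ ∈ (0, 1/2]` there is a constant `c_δ > 0` such that: given points
`x¹, …, x^N` in a real Hilbert space with positive integer multiplicities `a₁, …, a_N`
whose total `b = a₁ + ⋯ + a_N` is even and with `a_k ≥ δ·b` for each `k`, the multiset
consisting of `a_k` copies of each `x^k` admits an enumeration `z₁, …, z_b` such that the
averages of the two halves differ in norm by at least `c_δ` times the diameter of
`{x¹, …, x^N}`. -/
theorem halves_far_apart (δ : ℝ) (hδ : 0 < δ) (hδ2 : δ ≤ 1 / 2) :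
    ∃ c : ℝ, 0 < c ∧
      ∀ (H : Type u) [NormedAddCommGroup H] [InnerProductSpace ℝ H]
        (N : ℕ) (x : Fin N → H) (a : Fin N → ℕ),
        (∀ k, 0 < a k) →
        (∀ k, δ * (∑ k, a k : ℕ) ≤ (a k : ℝ)) →
        2 ∣ (∑ k, a k) →
        ∃ z : Fin (∑ k, a k) → H,
          (Multiset.map z (Finset.univ.val) =
            ∑ k, Multiset.replicate (a k) (x k)) ∧
          c * Metric.diam (Set.range x) ≤
            ‖(((∑ k, a k : ℕ) / 2 : ℕ) : ℝ)⁻¹ •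
                ((∑ i ∈ Finset.univ.filter (fun i : Fin (∑ k, a k) => (i : ℕ) < (∑ k, a k) / 2), z i)
                  - ∑ i ∈ Finset.univ.filter (fun i : Fin (∑ k, a k) => ¬ (i : ℕ) < (∑ k, a k) / 2), z i)‖ := by
  classical
  refine ⟨δ, hδ, ?_⟩
  intro H _ _ N x a hapos haδ hdvd
  set b := ∑ k, a k with hb
  set M : Multiset H := ∑ k, Multiset.replicate (a k) (x k) with hM
  have hcard : Multiset.card M = b := card_sum_replicate a x
  rcases Nat.eq_zero_or_pos N with hN | hN
  · -- degenerate : no points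
    obtain ⟨z, hz, -⟩ := exists_sorted_enum (fun _ => (0:ℝ)) M b hcard
    refine ⟨z, hz, ?_⟩
    have : Set.range x = ∅ := by
      subst hN; simp [Set.range_eq_empty]
    rw [this]
    simpa using norm_nonneg _
  · -- choose a diametral pair
    have hne : (Finset.univ ×ˢ Finset.univ : Finset (Fin N × Fin N)).Nonempty :=
      ⟨(⟨0, hN⟩, ⟨0, hN⟩), by simp⟩
    obtain ⟨pq, -, hpq⟩ := Finset.exists_mem_eq_sup' hne (fun pq => dist (x pq.1) (x pq.2))
    obtain ⟨p, q⟩ := pq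
    have hsup : ∀ i j : Fin N, dist (x i) (x j) ≤ dist (x p) (x q) := by
      intro i j
      rw [← hpq]
      exact Finset.le_sup' (f := fun pq => dist (x pq.1) (x pq.2)) (b := (i, j)) (Finset.mem_product.mpr ⟨mem_univ _, mem_univ _⟩)
    have hdiam : Metric.diam (Set.range x) = dist (x p) (x q) := by
      apply le_antisymm
      · apply Metric.diam_le_of_forall_dist_le dist_nonneg
        rintro _ ⟨i, rfl⟩ _ ⟨j, rfl⟩
        exact hsup i j
      · exact Metric.dist_le_diam_of_mem ((Set.finite_range x).isBounded) ⟨p, rfl⟩ ⟨q, rfl⟩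
    set u := x p - x q with hu
    have hDnorm : ‖u‖ = dist (x p) (x q) := by rw [hu, ← dist_eq_norm]
    obtain ⟨z, hz, hmono⟩ := exists_sorted_enum (fun v => (inner ℝ v u : ℝ)) M b hcard
    refine ⟨z, hz, ?_⟩
    rw [hdiam]
    by_cases hD0 : dist (x p) (x q) = 0
    · rw [hD0]
      simpa using norm_nonneg _
    have hDpos : 0 < dist (x p) (x q) := lt_of_le_of_ne dist_nonneg (Ne.symm hD0)
    -- basic numerology
    have hpne : p ≠ q := by
      intro hpq'
      apply hD0
      rw [hpq', dist_self]
    have hapb : a p + a q ≤ b := by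
      have h1 : ∑ k ∈ ({p, q} : Finset (Fin N)), a k ≤ b :=
        Finset.sum_le_sum_of_subset (Finset.subset_univ _)
      rwa [Finset.sum_pair hpne] at h1
    set m := min (a p) (a q) with hm
    have hmp : m ≤ a p := min_le_left _ _
    have hmq : m ≤ a q := min_le_right _ _
    have hbpos : 0 < b :=
      lt_of_lt_of_le (hapos p) (Finset.single_le_sum (fun _ _ => Nat.zero_le _) (mem_univ p))
    set h : ℕ := b / 2 with hh
    have h2b : 2 * h = b := Nat.mul_div_cancel' hdvd
    have hmh : m ≤ h := by
      rw [hh, Nat.le_div_iff_mul_le (by norm_num)]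
      omega
    have hhb : h ≤ b := Nat.div_le_self _ _
    -- counts
    have hcount : ∀ r : Fin N,
        a r ≤ (Finset.univ.filter (fun i : Fin b => x r = z i)).card := by
      intro r
      have h1 : (a r : ℕ) ≤ Multiset.count (x r) M := by
        rw [hM, Multiset.count_sum']
        have h2 := Finset.single_le_sum
          (f := fun k => Multiset.count (x r) (Multiset.replicate (a k) (x k)))
          (fun _ _ => Nat.zero_le _) (mem_univ r)
        simpa [Multiset.count_replicate] using h2
      rw [← hz, Multiset.count_map] at h1
      rw [Finset.card_def, Finset.filter_val]
      convert h1 using 2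
    -- the sorted g function over ℕ
    set g : ℕ → ℝ := fun n => if hn : n < b then (inner ℝ (z ⟨n, hn⟩) u : ℝ) else 0 with hg
    have hgz : ∀ i : Fin b, (inner ℝ (z i) u : ℝ) = g (i : ℕ) := by
      intro i
      rw [hg]
      simp only [i.isLt, dif_pos, Fin.eta]
    have gmono : ∀ i j : ℕ, i ≤ j → j < b → g i ≤ g j := by
      intro i j hij hj
      have hi : i < b := lt_of_le_of_lt hij hj
      rw [hg]
      simp only [dif_pos hi, dif_pos hj]
      exact hmono ⟨i, hi⟩ ⟨j, hj⟩ hij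
    -- pigeonhole lower/upper blocks
    have hbot : ∀ n : ℕ, n < m → g n ≤ (inner ℝ (x q) u : ℝ) := by
      intro n hnm
      have hn : n < b := by omega
      have hex : ∃ j ∈ Finset.univ.filter (fun i : Fin b => x q = z i), n ≤ (j : ℕ) := by
        by_contra hcon
        push_neg at hcon
        have hcard2 : (Finset.univ.filter (fun i : Fin b => x q = z i)).card ≤ n := by
          have h3 := Finset.card_le_card_of_injOn (fun j : Fin b => (j : ℕ))
            (t := Finset.range n)
            (fun j hj => Finset.mem_range.mpr (hcon j hj))
            (fun j _ j' _ hjj => Fin.val_injective hjj)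
          simpa using h3
        have h4 := le_trans (hcount q) hcard2
        omega
      obtain ⟨j, hj, hnj⟩ := hex
      simp only [Finset.mem_filter, Finset.mem_univ, true_and] at hj
      have h2 := hmono ⟨n, hn⟩ j hnj
      rw [← hj] at h2
      have h3 : g n = (inner ℝ (z ⟨n, hn⟩) u : ℝ) := by
        rw [hg]; simp only [dif_pos hn]
      rw [h3]
      exact h2
    have htop : ∀ n : ℕ, b - m ≤ n → n < b → (inner ℝ (x p) u : ℝ) ≤ g n := by
      intro n hbn hn
      have hex : ∃ j ∈ Finset.univ.filter (fun i : Fin b => x p = z i), (j : ℕ) ≤ n := by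
        by_contra hcon
        push_neg at hcon
        have hcard2 : (Finset.univ.filter (fun i : Fin b => x p = z i)).card ≤ b - (n + 1) := by
          have h3 := Finset.card_le_card_of_injOn (fun j : Fin b => (j : ℕ))
            (t := Finset.Ico (n + 1) b)
            (fun j hj => Finset.mem_Ico.mpr ⟨hcon j hj, j.isLt⟩)
            (fun j _ j' _ hjj => Fin.val_injective hjj)
          simpa using h3
        have h4 := le_trans (hcount p) hcard2
        omega
      obtain ⟨j, hj, hnj⟩ := hex
      simp only [Finset.mem_filter, Finset.mem_univ, true_and] at hj
      have h2 := hmono j ⟨n, hn⟩ hnj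
      rw [← hj] at h2
      have h3 : g n = (inner ℝ (z ⟨n, hn⟩) u : ℝ) := by
        rw [hg]; simp only [dif_pos hn]
      rw [h3]
      exact h2
    -- converting the two goal sums to sums of g over ranges
    have hsum1 : (inner ℝ (∑ i ∈ Finset.univ.filter (fun i : Fin b => (i : ℕ) < h), z i) u : ℝ)
        = ∑ n ∈ Finset.range h, g n := by
      rw [sum_inner, Finset.sum_filter]
      have e1 : ∀ i : Fin b, (if (i : ℕ) < h then (inner ℝ (z i) u : ℝ) else 0)
          = (fun n => if n < h then g n else 0) ((i : ℕ)) := by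
        intro i; simp only [hgz i]
      rw [Finset.sum_congr rfl (fun i _ => e1 i),
        Fin.sum_univ_eq_sum_range (fun n => if n < h then g n else 0) b, ← Finset.sum_filter]
      congr 1
      ext n
      simp only [Finset.mem_filter, Finset.mem_range]
      omega
    have hsum2 : (inner ℝ (∑ i ∈ Finset.univ.filter (fun i : Fin b => ¬ (i : ℕ) < h), z i) u : ℝ)
        = ∑ n ∈ Finset.Ico h b, g n := by
      rw [sum_inner, Finset.sum_filter]
      have e1 : ∀ i : Fin b, (if ¬ (i : ℕ) < h then (inner ℝ (z i) u : ℝ) else 0)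
          = (fun n => if ¬ n < h then g n else 0) ((i : ℕ)) := by
        intro i; simp only [hgz i]
      rw [Finset.sum_congr rfl (fun i _ => e1 i),
        Fin.sum_univ_eq_sum_range (fun n => if ¬ n < h then g n else 0) b, ← Finset.sum_filter]
      congr 1
      ext n
      simp only [Finset.mem_filter, Finset.mem_range, Finset.mem_Ico]
      omega
    have hsplit1 : ∑ n ∈ Finset.range h, g n
        = ∑ n ∈ Finset.range m, g n + ∑ n ∈ Finset.Ico m h, g n := by
      rw [Finset.range_eq_Ico, Finset.range_eq_Ico]
      exact (Finset.sum_Ico_consecutive g (Nat.zero_le m) hmh).symm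
    have hsplit2 : ∑ n ∈ Finset.Ico h b, g n
        = ∑ n ∈ Finset.Ico h (b - m), g n + ∑ n ∈ Finset.Ico (b - m) b, g n :=
      (Finset.sum_Ico_consecutive g (by omega) (by omega)).symm
    have hB1 : ∑ n ∈ Finset.range m, g n ≤ (m : ℝ) * (inner ℝ (x q) u : ℝ) := by
      have h3 := Finset.sum_le_card_nsmul (Finset.range m) g (inner ℝ (x q) u : ℝ)
        (fun n hn => hbot n (Finset.mem_range.mp hn))
      simpa [nsmul_eq_mul] using h3
    have hB2 : (m : ℝ) * (inner ℝ (x p) u : ℝ) ≤ ∑ n ∈ Finset.Ico (b - m) b, g n := by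
      have h3 := Finset.card_nsmul_le_sum (Finset.Ico (b - m) b) g (inner ℝ (x p) u : ℝ)
        (fun n hn => htop n (Finset.mem_Ico.mp hn).1 (Finset.mem_Ico.mp hn).2)
      have hc : (Finset.Ico (b - m) b).card = m := by rw [Nat.card_Ico]; omega
      rw [hc] at h3
      simpa [nsmul_eq_mul] using h3
    have hB3 : ∑ n ∈ Finset.Ico m h, g n ≤ ∑ n ∈ Finset.Ico h (b - m), g n := by
      calc ∑ n ∈ Finset.Ico m h, g n ≤ ∑ n ∈ Finset.Ico m h, g (n + (h - m)) := by
            apply Finset.sum_le_sum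
            intro n hn
            rw [Finset.mem_Ico] at hn
            exact gmono n (n + (h - m)) (Nat.le_add_right _ _) (by omega)
        _ = ∑ n ∈ Finset.Ico (m + (h - m)) (h + (h - m)), g n := Finset.sum_Ico_add' g m h (h - m)
        _ = ∑ n ∈ Finset.Ico h (b - m), g n := by
            rw [show m + (h - m) = h by omega, show h + (h - m) = b - m by omega]
    have hinner : (inner ℝ (x p) u : ℝ) - (inner ℝ (x q) u : ℝ) = ‖u‖ ^ 2 := by
      rw [← inner_sub_left]
      exact real_inner_self_eq_norm_sq u
    have hkey : (m : ℝ) * ‖u‖ ^ 2 ≤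
        (inner ℝ ((∑ i ∈ Finset.univ.filter (fun i : Fin b => ¬ (i : ℕ) < h), z i)
          - ∑ i ∈ Finset.univ.filter (fun i : Fin b => (i : ℕ) < h), z i) u : ℝ) := by
      rw [inner_sub_left, hsum1, hsum2]
      have h3 : (m : ℝ) * ‖u‖ ^ 2 = (m : ℝ) * (inner ℝ (x p) u : ℝ) - (m : ℝ) * (inner ℝ (x q) u : ℝ) := by
        rw [← mul_sub, hinner]
      rw [h3]
      linarith
    set S := (∑ i ∈ Finset.univ.filter (fun i : Fin b => ¬ (i : ℕ) < h), z i)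
      - ∑ i ∈ Finset.univ.filter (fun i : Fin b => (i : ℕ) < h), z i with hS
    have hup : (0 : ℝ) < ‖u‖ := by rw [hDnorm]; exact hDpos
    have h6 : (m : ℝ) * ‖u‖ ≤ ‖S‖ := by
      have h5 : (m : ℝ) * ‖u‖ ^ 2 ≤ ‖S‖ * ‖u‖ := le_trans hkey (real_inner_le_norm S u)
      apply le_of_mul_le_mul_right _ hup
      calc (m : ℝ) * ‖u‖ * ‖u‖ = (m : ℝ) * ‖u‖ ^ 2 := by ring
        _ ≤ ‖S‖ * ‖u‖ := h5
    have hnorm : ‖((h : ℕ) : ℝ)⁻¹ •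
        ((∑ i ∈ Finset.univ.filter (fun i : Fin b => (i : ℕ) < h), z i)
          - ∑ i ∈ Finset.univ.filter (fun i : Fin b => ¬ (i : ℕ) < h), z i)‖
        = ((h : ℕ) : ℝ)⁻¹ * ‖S‖ := by
      rw [norm_smul, norm_sub_rev]
      congr 1
      simp [Real.norm_eq_abs, abs_of_nonneg]
    rw [hnorm]
    have hhpos : (0 : ℝ) < ((h : ℕ) : ℝ) := by
      have : 0 < h := by omega
      exact_mod_cast this
    rw [le_inv_mul_iff₀ hhpos]
    have hmreal : δ * (b : ℝ) ≤ (m : ℝ) := by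
      rw [hm, Nat.cast_min]
      exact le_min (haδ p) (haδ q)
    have hhbR : 2 * ((h : ℕ) : ℝ) = (b : ℝ) := by exact_mod_cast congrArg (Nat.cast : ℕ → ℝ) h2b
    have k1 : δ * (b : ℝ) * dist (x p) (x q) ≤ (m : ℝ) * dist (x p) (x q) :=
      mul_le_mul_of_nonneg_right hmreal hDpos.le
    have k2 : (m : ℝ) * dist (x p) (x q) ≤ ‖S‖ := by rw [← hDnorm]; exact h6
    nlinarith [mul_nonneg (mul_nonneg hδ.le hDpos.le) (Nat.cast_nonneg h : (0:ℝ) ≤ ((h:ℕ):ℝ))]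
end
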